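/- arXiv:2003.08700 — 5 statements merged into one kernel-verified Lean document; each statement's English description precedes it below -/
import Mathlib

section
/- Let a_1 ≤ a_2 ≤ ... ≤ a_{n+1} be positive integers with n ≥ 2 and gcd(a_1,...,a_{n+1}) = 1. Set d_i := gcd({a_k : k ≠ i}) and δ_i := gcd({d_k · a_k : k ≠ i}). Then for every i one has δ_i = ∏_{j=1}^{n+1} d_j. -/
lemma nat_prod_dvd_of_coprime {ι : Type*} [DecidableEq ι] (t : Finset ι) (f : ι → ℕ) (z : ℕ)
    (hcop : ∀ i ∈ t, ∀ j ∈ t, i ≠ j → Nat.Coprime (f i) (f j))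
    (hdvd : ∀ i ∈ t, f i ∣ z) : (∏ i ∈ t, f i) ∣ z := by
  induction t using Finset.induction_on with
  | empty => simp
  | @insert c s hnot ih =>
    rw [Finset.prod_insert hnot]
    refine Nat.Coprime.mul_dvd_of_dvd_of_dvd ?_ (hdvd c (Finset.mem_insert_self c s)) ?_
    · exact Nat.Coprime.prod_right fun i hi =>
        hcop c (Finset.mem_insert_self c s) i (Finset.mem_insert_of_mem hi)
          (by rintro rfl; exact hnot hi)
    · exact ih (fun i hi j hj hij => hcop i (Finset.mem_insert_of_mem hi) j
        (Finset.mem_insert_of_mem hj) hij) (fun i hi => hdvd i (Finset.mem_insert_of_mem hi))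

theorem stmt4 (n : ℕ) (hn : 2 ≤ n) (a : Fin (n + 1) → ℕ)
    (hpos : ∀ i, 0 < a i) (hmono : Monotone a) (hgcd : Finset.univ.gcd a = 1) :
    ∀ i : Fin (n + 1),
      Finset.gcd (Finset.univ.erase i)
          (fun k => Finset.gcd (Finset.univ.erase k) a * a k) =
        ∏ j, Finset.gcd (Finset.univ.erase j) a := by
  intro i
  set d : Fin (n + 1) → ℕ := fun k => Finset.gcd (Finset.univ.erase k) a with hd
  have hdd : ∀ j k : Fin (n + 1), j ≠ k → d j ∣ a k := by
    intro j k hjk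
    exact Finset.gcd_dvd (by simp [hjk.symm])
  -- pairwise coprime
  have hcop : ∀ j k : Fin (n + 1), j ≠ k → Nat.Coprime (d j) (d k) := by
    intro j k hjk
    have h1 : Nat.gcd (d j) (d k) ∣ 1 := by
      rw [← hgcd]
      refine Finset.dvd_gcd fun m _ => ?_
      rcases eq_or_ne m j with rfl | hm
      · exact (Nat.gcd_dvd_right _ _).trans (hdd k m (Ne.symm hjk))
      · exact (Nat.gcd_dvd_left _ _).trans (hdd j m (Ne.symm hm))
    exact Nat.dvd_one.mp h1
  -- product of d over erase k divides a k
  have hprod : ∀ k : Fin (n + 1), (∏ j ∈ Finset.univ.erase k, d j) ∣ a k := by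
    intro k
    exact nat_prod_dvd_of_coprime _ _ _
      (fun x _ y _ hxy => hcop x y hxy)
      (fun j hj => hdd j k (Finset.ne_of_mem_erase hj))
  set b : Fin (n + 1) → ℕ := fun k => a k / ∏ j ∈ Finset.univ.erase k, d j with hb
  have hab : ∀ k, a k = (∏ j ∈ Finset.univ.erase k, d j) * b k := by
    intro k
    rw [hb]
    exact (Nat.mul_div_cancel' (hprod k)).symm
  have hkey : ∀ k : Fin (n + 1), d k * a k = (∏ j, d j) * b k := by
    intro k
    rw [hab k, ← mul_assoc, Finset.mul_prod_erase Finset.univ d (Finset.mem_univ k)]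
  have hrw : Finset.gcd (Finset.univ.erase i) (fun k => d k * a k)
      = Finset.gcd (Finset.univ.erase i) (fun k => (∏ j, d j) * b k) := by
    apply Finset.gcd_congr rfl
    intro k _
    exact hkey k
  rw [show (fun k => Finset.gcd (Finset.univ.erase k) a * a k) = fun k => d k * a k from rfl,
    hrw, Finset.gcd_mul_left]
  -- now need: normalize (∏ j, d j) * gcd b = ∏ j, d j
  have hdipos : d i ≠ 0 := by
    haveI : Nontrivial (Fin (n + 1)) := Fin.nontrivial_iff_two_le.mpr (by omega)
    obtain ⟨k, hk⟩ := exists_ne i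
    have hdvd : d i ∣ a k := hdd i k (Ne.symm hk)
    intro h0
    rw [h0] at hdvd
    exact (hpos k).ne' (zero_dvd_iff.mp hdvd)
  have hg1 : Finset.gcd (Finset.univ.erase i) b = 1 := by
    set g := Finset.gcd (Finset.univ.erase i) b with hgdef
    have hgdvd : g * d i ∣ d i := by
      refine Finset.dvd_gcd fun k hk => ?_
      have hki : k ≠ i := Finset.ne_of_mem_erase hk
      have h1 : g ∣ b k := Finset.gcd_dvd hk
      have h2 : d i ∣ ∏ j ∈ Finset.univ.erase k, d j :=
        Finset.dvd_prod_of_mem d (by simp [Ne.symm hki])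
      calc g * d i ∣ b k * ∏ j ∈ Finset.univ.erase k, d j := mul_dvd_mul h1 h2
        _ = a k := by rw [mul_comm, ← hab k]
    have : g ∣ 1 := (Nat.mul_dvd_mul_iff_right (Nat.pos_of_ne_zero hdipos)).mp
      (by rw [one_mul]; exact hgdvd)
    exact Nat.dvd_one.mp this
  rw [hg1, mul_one]
  simp
end

section
/- Let a_1, ..., a_{n+1} be positive reals with n ≥ 1, set |a| := Σ_{i=1}^{n+1} a_i, and let Λ be the n×(n+1) real matrix whose k-th column for 1 ≤ k ≤ n is |a|·e_k − a' (where a' = (a_1,...,a_n)^T and e_k is the k-th standard basis vector) and whose (n+1)-st column is −a'. Then for every i ∈ {1,...,n+1}, the absolute value of the determinant of the n×n matrix obtained from Λ by deleting the i-th column equals a_i·|a|^{n−1}. -/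
open Matrix Finset

private lemma succAbove_val' {n : ℕ} (i : Fin (n + 1)) (k : Fin n) :
    ((i.succAbove k : Fin (n + 1)) : ℕ) = if (k : ℕ) < (i : ℕ) then (k : ℕ) else (k : ℕ) + 1 := by
  rcases lt_or_ge ((k : ℕ)) ((i : ℕ)) with h | h
  · rw [if_pos h, Fin.succAbove, if_pos (by simpa [Fin.lt_def] using h)]
    rfl
  · rw [if_neg (not_lt.2 h), Fin.succAbove, if_neg (by simpa [Fin.lt_def] using not_lt.2 h)]
    rfl

private def delPerm {n : ℕ} (i : Fin n) : Equiv.Perm (Fin n) where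
  toFun j := ⟨if (j : ℕ) + 1 = n then (i : ℕ) else if (j : ℕ) < (i : ℕ) then (j : ℕ) else (j : ℕ) + 1,
    by have := j.isLt; have := i.isLt; split_ifs <;> omega⟩
  invFun j := ⟨if (j : ℕ) = (i : ℕ) then n - 1 else if (j : ℕ) < (i : ℕ) then (j : ℕ) else (j : ℕ) - 1,
    by have := j.isLt; have := i.isLt; split_ifs <;> omega⟩
  left_inv j := by
    have h1 := j.isLt; have h2 := i.isLt
    apply Fin.ext
    simp only [Fin.val_mk]
    split_ifs <;> omega
  right_inv j := by
    have h1 := j.isLt; have h2 := i.isLt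
    apply Fin.ext
    simp only [Fin.val_mk]
    split_ifs <;> omega

private lemma delPerm_val {n : ℕ} (i j : Fin n) :
    ((delPerm i j : Fin n) : ℕ)
      = if (j : ℕ) + 1 = n then (i : ℕ) else if (j : ℕ) < (i : ℕ) then (j : ℕ) else (j : ℕ) + 1 :=
  rfl

private lemma aux_det {n : ℕ} (i : Fin (n + 1)) (hi : (i : ℕ) < n) (s : ℝ) (hs : 0 < s)
    (b : Fin n → ℝ) :
    |(Matrix.of fun (j k : Fin n) =>
        (if (j : ℕ) = ((i.succAbove k : Fin (n + 1)) : ℕ) then s else 0) - b j).det|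
      = |b ⟨(i : ℕ), hi⟩| * s ^ (n - 1) := by
  set i' : Fin n := ⟨(i : ℕ), hi⟩ with hi'
  set M : Matrix (Fin n) (Fin n) ℝ :=
    Matrix.of fun (j k : Fin n) =>
      (if (j : ℕ) = ((i.succAbove k : Fin (n + 1)) : ℕ) then s else 0) - b j with hM
  -- row i' of M is constant -b i'
  have hrow : ∀ k, M i' k = -(b i') := by
    intro k
    have hne : ((i' : ℕ) : ℕ) ≠ ((i.succAbove k : Fin (n + 1)) : ℕ) := by
      rw [succAbove_val' i k]
      have hk := k.isLt
      have hii : (i' : ℕ) = (i : ℕ) := rfl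
      rw [hii]
      split_ifs <;> omega
    simp [hM, hne]
  have hA : M = Matrix.updateRow M i' ((-(b i')) • fun _ => (1 : ℝ)) := by
    ext j k
    rcases eq_or_ne j i' with rfl | h
    · rw [Matrix.updateRow_self]
      simpa using hrow k
    · rw [Matrix.updateRow_ne h]
  -- the matrix with row i' replaced by ones
  set B : Matrix (Fin n) (Fin n) ℝ :=
    Matrix.of fun (j k : Fin n) =>
      if j = i' then 1 else (if (j : ℕ) = ((i.succAbove k : Fin (n + 1)) : ℕ) then s else 0)
    with hB
  have hdetB : (Matrix.updateRow M i' (fun _ => (1 : ℝ))).det = B.det := by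
    apply Matrix.det_eq_of_forall_row_eq_smul_add_const
      (fun j => if j = i' then 0 else -b j) i' (by simp)
    intro j k
    rcases eq_or_ne j i' with rfl | h
    · simp [hB]
    · rw [Matrix.updateRow_ne h]
      simp [hM, hB, h, sub_eq_add_neg]
  -- the 0/1 matrix
  set Q : Matrix (Fin n) (Fin n) ℝ :=
    Matrix.of fun (j k : Fin n) =>
      if j = i' then 1 else (if (j : ℕ) = ((i.succAbove k : Fin (n + 1)) : ℕ) then (1 : ℝ) else 0)
    with hQ
  set d : Fin n → ℝ := fun j => if j = i' then 1 else s with hd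
  have hBQ : B = Matrix.diagonal d * Q := by
    ext j k
    rw [Matrix.diagonal_mul]
    rcases eq_or_ne j i' with rfl | h
    · simp [hB, hQ, hd]
    · simp [hB, hQ, hd, h, mul_ite]
  have hprod : ∏ j, d j = s ^ (n - 1) := by
    rw [← Finset.mul_prod_erase _ _ (Finset.mem_univ i')]
    rw [Finset.prod_eq_pow_card (b := s) (fun j hj => by
      simp only [hd]
      rw [if_neg (Finset.ne_of_mem_erase hj)])]
    simp [Finset.card_erase_of_mem, hd]
  -- |det Q| = 1 via permuting rows to lower triangular
  have htri : (Q.submatrix (delPerm i') id).BlockTriangular OrderDual.toDual := by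
    intro j k hjk
    have hjk' : (j : ℕ) < (k : ℕ) := hjk
    have hk := k.isLt
    have hdv := delPerm_val i' j
    have hσ := succAbove_val' i k
    have hii : (i' : ℕ) = (i : ℕ) := rfl
    simp only [Matrix.submatrix_apply, id_eq, Matrix.of_apply, hQ]
    rw [if_neg, if_neg]
    · rw [hdv, hσ]; rw [hii] at hdv ⊢; split_ifs <;> omega
    · intro hcon
      have := congrArg Fin.val hcon
      rw [hdv, hii] at this
      split_ifs at this <;> omega
  have hdiag : ∀ j, (Q.submatrix (delPerm i') id) j j = 1 := by
    intro j
    have hj := j.isLt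
    have hdv := delPerm_val i' j
    have hσ := succAbove_val' i j
    have hii : (i' : ℕ) = (i : ℕ) := rfl
    simp only [Matrix.submatrix_apply, id_eq, Matrix.of_apply, hQ]
    by_cases h1 : delPerm i' j = i'
    · rw [if_pos h1]
    · rw [if_neg h1, if_pos]
      have h1' : ((delPerm i' j : Fin n) : ℕ) ≠ (i' : ℕ) := fun h => h1 (Fin.ext h)
      rw [hdv, hii] at h1'
      rw [hdv, hσ, hii]
      split_ifs at h1' ⊢ <;> omega
  have hRdet : (Q.submatrix (delPerm i') id).det = 1 := by
    rw [Matrix.det_of_lowerTriangular _ htri]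
    exact Finset.prod_eq_one fun j _ => hdiag j
  have hsign := Matrix.det_permute (delPerm i') Q
  rw [hRdet] at hsign
  have habsQ : |Q.det| = 1 := by
    rcases Int.units_eq_one_or (Equiv.Perm.sign (delPerm i')) with h | h
    · rw [h] at hsign; simp at hsign; rw [← hsign]; exact abs_one
    · rw [h] at hsign; simp at hsign
      have hq : Q.det = -1 := by linarith
      rw [hq]; simp
  -- assemble
  rw [hA, Matrix.det_updateRow_smul, hdetB, hBQ, Matrix.det_mul, Matrix.det_diagonal, hprod]
  rw [abs_mul, abs_neg, abs_mul, habsQ, abs_of_nonneg (pow_nonneg hs.le _)]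
  ring

theorem stmt7 (n : ℕ) (hn : 1 ≤ n) (a : Fin (n + 1) → ℝ) (hpos : ∀ i, 0 < a i) :
    ∀ i : Fin (n + 1),
      |((Matrix.of fun (j : Fin n) (k : Fin (n + 1)) =>
            (if (j : ℕ) = (k : ℕ) then (∑ l, a l) else 0) - a j.castSucc).submatrix
          id i.succAbove).det| = a i * (∑ l, a l) ^ (n - 1) := by
  intro i
  have hspos : 0 < ∑ l, a l := Finset.sum_pos (fun l _ => hpos l) Finset.univ_nonempty
  set s : ℝ := ∑ l, a l with hs
  by_cases hi : (i : ℕ) < n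
  · -- deleted column is not the last one
    have hmat : ((Matrix.of fun (j : Fin n) (k : Fin (n + 1)) =>
            (if (j : ℕ) = (k : ℕ) then s else 0) - a j.castSucc).submatrix
          id i.succAbove)
        = Matrix.of fun (j k : Fin n) =>
            (if (j : ℕ) = ((i.succAbove k : Fin (n + 1)) : ℕ) then s else 0) - a j.castSucc := by
      ext j k; simp [Matrix.submatrix_apply]
    rw [hmat, aux_det i hi s hspos (fun j => a j.castSucc)]
    have hc : (⟨(i : ℕ), hi⟩ : Fin n).castSucc = i := Fin.ext rfl
    rw [hc, abs_of_pos (hpos i)]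
  · -- deleted column is the last one
    have hin : (i : ℕ) = n := by have := i.isLt; omega
    have hilast : i = Fin.last n := Fin.ext hin
    have hsne : s ≠ 0 := ne_of_gt hspos
    have hmat : ((Matrix.of fun (j : Fin n) (k : Fin (n + 1)) =>
            (if (j : ℕ) = (k : ℕ) then s else 0) - a j.castSucc).submatrix
          id i.succAbove)
        = s • (1 + Matrix.replicateCol Unit (fun j : Fin n => -(a j.castSucc) / s)
            * Matrix.replicateRow Unit (fun _ => (1 : ℝ))) := by
      ext j k
      have hσ := succAbove_val' i k
      have hk := k.isLt
      have hσ' : ((i.succAbove k : Fin (n + 1)) : ℕ) = (k : ℕ) := by rw [hσ]; rw [if_pos]; omega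
      simp only [Matrix.submatrix_apply, id_eq, Matrix.of_apply, Matrix.smul_apply,
        Matrix.add_apply, Matrix.mul_apply, Matrix.replicateCol_apply, Matrix.replicateRow_apply,
        Matrix.one_apply, Finset.univ_unique, Finset.sum_singleton, hσ', Fin.val_eq_val,
        smul_eq_mul]
      split_ifs with h
      all_goals (field_simp; try ring)
    rw [hmat, Matrix.det_smul, Matrix.det_one_add_replicateCol_mul_replicateRow]
    have hdot : (fun _ => (1:ℝ)) ⬝ᵥ (fun j : Fin n => -(a j.castSucc) / s)
        = -(∑ j : Fin n, a j.castSucc) / s := by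
      simp [dotProduct, neg_div, Finset.sum_div, Finset.sum_neg_distrib]
    have hsplit : s = (∑ j : Fin n, a j.castSucc) + a (Fin.last n) := by
      rw [hs]; exact Fin.sum_univ_castSucc a
    obtain ⟨m, rfl⟩ : ∃ m, n = m + 1 := ⟨n - 1, by omega⟩
    rw [hdot]
    have h1 : (1 : ℝ) + -(∑ j : Fin (m+1), a j.castSucc) / s = a (Fin.last (m+1)) / s := by
      field_simp
      linarith [hsplit]
    rw [h1, Fintype.card_fin, hilast, abs_of_pos]
    · rw [show m + 1 - 1 = m from rfl]
      field_simp
      ring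
    · exact mul_pos (pow_pos hspos _) (div_pos (hpos _) hspos)
end

section
/- Let n ≥ 1 and d ≥ n+1 be integers. Then the set of points x ∈ ℤ^n satisfying Σ_{j=1}^n x_j ≤ 1 and d·x_k − Σ_{j=1}^n x_j ≥ −(d−n) for every k = 1,...,n is exactly {0, e_1, ..., e_n, −𝟙}, where e_k are the standard basis vectors and 𝟙 = (1,...,1). -/
theorem stmt11 (n : ℕ) (hn : 1 ≤ n) (d : ℤ) (hd : (n : ℤ) + 1 ≤ d) :
    {x : Fin n → ℤ |
        (∑ j, x j) ≤ 1 ∧ ∀ k, -(d - (n : ℤ)) ≤ d * x k - ∑ j, x j} =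
      insert 0 (insert (fun _ => -1)
        (Set.range fun i : Fin n => (Pi.single i 1 : Fin n → ℤ))) := by
  ext x
  simp only [Set.mem_setOf_eq, Set.mem_insert_iff, Set.mem_range]
  constructor
  · rintro ⟨hS, hk⟩
    set S := ∑ j, x j with hSdef
    have hsum : n * (-(d - (n : ℤ))) ≤ (d - n) * S := by
      have h1 : ∑ _k : Fin n, (-(d - (n : ℤ))) ≤ ∑ k, (d * x k - S) :=
        Finset.sum_le_sum fun k _ => hk k
      have h2 : ∑ k : Fin n, (d * x k - S) = (d - n) * S := by
        rw [Finset.sum_sub_distrib, ← Finset.mul_sum, Finset.sum_const,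
          Finset.card_univ, Fintype.card_fin, nsmul_eq_mul]
        ring
      have h3 : ∑ _k : Fin n, (-(d - (n : ℤ))) = n * (-(d - (n : ℤ))) := by
        rw [Finset.sum_const, Finset.card_univ, Fintype.card_fin, nsmul_eq_mul]
      rw [h3, h2] at h1
      exact h1
    have hSlb : -(n : ℤ) ≤ S := by nlinarith
    have hxlb : ∀ k, -1 ≤ x k := by
      intro k
      have h1 : d * (-1) ≤ d * x k := by linarith [hk k]
      exact le_of_mul_le_mul_left h1 (by linarith)
    by_cases hneg : ∃ k, x k = -1
    · obtain ⟨k, hkeq⟩ := hneg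
      have hSub : S ≤ -(n : ℤ) := by
        have := hk k
        rw [hkeq] at this
        linarith
      have hzero : ∑ j, (x j + 1) = 0 := by
        have : ∑ j, (x j + 1) = S + n := by
          rw [Finset.sum_add_distrib, Finset.sum_const, Finset.card_univ,
            Fintype.card_fin, nsmul_eq_mul]
          ring
        linarith [this]
      have hall : ∀ j ∈ Finset.univ, x j + 1 = 0 :=
        (Finset.sum_eq_zero_iff_of_nonneg fun j _ => by linarith [hxlb j]).mp hzero
      right; left
      funext j
      have := hall j (Finset.mem_univ j)
      linarith
    · have hx0 : ∀ k, 0 ≤ x k := by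
        intro k
        rcases lt_or_ge (x k) 0 with h | h
        · exfalso
          exact hneg ⟨k, by have := hxlb k; omega⟩
        · exact h
      have hS0 : 0 ≤ S := Finset.sum_nonneg fun j _ => hx0 j
      rcases eq_or_lt_of_le hS0 with h | h
      · left
        have hall : ∀ j ∈ Finset.univ, x j = 0 :=
          (Finset.sum_eq_zero_iff_of_nonneg fun j _ => hx0 j).mp h.symm
        funext j
        exact hall j (Finset.mem_univ j)
      · have hS1 : S = 1 := by omega
        have hex : ∃ i, 1 ≤ x i := by
          by_contra hc
          push_neg at hc
          have : S ≤ 0 := Finset.sum_nonpos fun j _ => by have := hc j; omega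
          omega
        obtain ⟨i, hi⟩ := hex
        have hsplit : S = x i + ∑ j ∈ Finset.univ.erase i, x j := by
          rw [hSdef, ← Finset.add_sum_erase _ _ (Finset.mem_univ i)]
        have hrest : 0 ≤ ∑ j ∈ Finset.univ.erase i, x j :=
          Finset.sum_nonneg fun j _ => hx0 j
        have hrest0 : ∑ j ∈ Finset.univ.erase i, x j = 0 := by omega
        have hxi : x i = 1 := by omega
        have hall : ∀ j ∈ Finset.univ.erase i, x j = 0 :=
          (Finset.sum_eq_zero_iff_of_nonneg fun j _ => hx0 j).mp hrest0
        right; right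
        refine ⟨i, ?_⟩
        funext j
        by_cases hji : j = i
        · subst hji; simp [hxi]
        · rw [Pi.single_eq_of_ne hji]
          exact (hall j (Finset.mem_erase.mpr ⟨hji, Finset.mem_univ j⟩)).symm
  · rintro (rfl | rfl | ⟨i, rfl⟩)
    · refine ⟨by simp, fun k => by simp; linarith⟩
    · have hsum : ∑ _j : Fin n, (-1 : ℤ) = -(n : ℤ) := by
        simp [Finset.sum_const, Finset.card_univ]
      refine ⟨by rw [hsum]; linarith, fun k => by rw [hsum]; ring_nf; linarith⟩
    · have hsum : ∑ j, (Pi.single i 1 : Fin n → ℤ) j = 1 := by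
        simp
      refine ⟨by rw [hsum], fun k => ?_⟩
      rw [hsum]
      by_cases hki : k = i
      · subst hki; rw [Pi.single_eq_same]; linarith
      · rw [Pi.single_eq_of_ne hki]; simp; linarith
end

section
/- Let n ≥ 2 and d ≥ 2 be integers, and let B be the n×n integer matrix with B_{ij} = d−1 if i = j ≤ n−1, B_{in} = 1 for all i, and B_{ij} = −1 otherwise (i.e. the first n−1 diagonal entries are d−1, the last column is all 1's, and all remaining entries are −1). Then det(B) = d^{n−1}, and the cokernel ℤ^n / B·ℤ^n is isomorphic to (ℤ/dℤ)^{n−1}; equivalently, the Smith normal form of B is diag(1, d, ..., d). -/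
theorem keymv (m d : ℕ) (y : Fin (m+2) → ℤ) (i : Fin (m+2)) :
    (Matrix.of fun i j : Fin (m+2) =>
        if (j : ℕ) = m + 1 then (1 : ℤ)
        else if i = j then (d : ℤ) - 1 else -1).mulVec y i
      = d * (if i = Fin.last (m+1) then 0 else y i) + 2 * y (Fin.last (m+1)) - ∑ j, y j := by
  have hterm : ∀ j : Fin (m+2),
      (Matrix.of fun i j : Fin (m+2) =>
        if (j : ℕ) = m + 1 then (1 : ℤ)
        else if i = j then (d : ℤ) - 1 else -1) i j * y j
      = (if j = i then (if j = Fin.last (m+1) then 0 else d * y j) else 0)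
        + (if j = Fin.last (m+1) then 2 * y j else 0) - y j := by
    intro j
    have hlast : ((j : ℕ) = m + 1) ↔ j = Fin.last (m+1) := by
      rw [Fin.ext_iff]; simp [Fin.val_last]
    simp only [Matrix.of_apply]
    by_cases h1 : j = Fin.last (m+1)
    · by_cases h2 : j = i <;> simp [h1, h2, hlast] <;> ring
    · by_cases h2 : i = j
      · subst h2
        simp [h1, hlast]; ring
      · have h2' : ¬ (j = i) := fun h => h2 h.symm
        simp only [hlast, h1, if_false, h2, h2']
        ring
  simp only [Matrix.mulVec, dotProduct]
  rw [Finset.sum_congr rfl (fun j _ => hterm j)]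
  rw [Finset.sum_sub_distrib, Finset.sum_add_distrib,
    Finset.sum_ite_eq' Finset.univ i, Finset.sum_ite_eq' Finset.univ (Fin.last (m+1))]
  simp only [Finset.mem_univ, if_true]
  by_cases hi : i = Fin.last (m+1) <;> simp [hi] <;> ring

noncomputable def phi (m d : ℕ) : (Fin (m+2) → ℤ) →ₗ[ℤ] (Fin (m+1) → ZMod d) where
  toFun x k := ((x k.castSucc - x (Fin.last (m+1)) : ℤ) : ZMod d)
  map_add' x y := by funext k; simp only [Pi.add_apply]; push_cast; ring
  map_smul' r x := by funext k; simp [zsmul_eq_mul]; push_cast; ring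

theorem range_eq_ker (m d : ℕ) :
    LinearMap.range (Matrix.mulVecLin (Matrix.of fun i j : Fin (m+2) =>
        if (j : ℕ) = m + 1 then (1 : ℤ)
        else if i = j then (d : ℤ) - 1 else -1)) = LinearMap.ker (phi m d) := by
  apply le_antisymm
  · rintro _ ⟨y, rfl⟩
    rw [LinearMap.mem_ker]
    funext k
    have hk : k.castSucc ≠ Fin.last (m+1) := by
      simp only [ne_eq, Fin.ext_iff, Fin.coe_castSucc, Fin.val_last]; omega
    simp only [phi, LinearMap.coe_mk, AddHom.coe_mk, Matrix.mulVecLin_apply]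
    rw [keymv, keymv]
    simp only [hk, if_neg, if_pos rfl, Pi.zero_apply]
    push_cast
    simp [ZMod.natCast_self]
  · intro x hx
    rw [LinearMap.mem_ker] at hx
    have hx' : ∀ k : Fin (m+1), (d : ℤ) ∣ x k.castSucc - x (Fin.last (m+1)) := by
      intro k
      rw [← ZMod.intCast_zmod_eq_zero_iff_dvd]
      exact congrFun hx k
    set q : Fin (m+2) → ℤ := fun i => (x i - x (Fin.last (m+1))) / d with hq
    have hqlast : q (Fin.last (m+1)) = 0 := by simp [hq]
    have hdq : ∀ i : Fin (m+2), i ≠ Fin.last (m+1) → d * q i = x i - x (Fin.last (m+1)) := by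
      intro i hi
      have hlt : (i : ℕ) < m + 1 := by
        have := i.isLt
        rcases Nat.lt_or_ge (i : ℕ) (m+1) with h | h
        · exact h
        · exfalso; apply hi; rw [Fin.ext_iff]; simp [Fin.val_last]; omega
      have : i = (⟨(i : ℕ), hlt⟩ : Fin (m+1)).castSucc := by rw [Fin.ext_iff]; simp
      rw [hq]
      exact Int.mul_ediv_cancel' (this ▸ hx' ⟨(i : ℕ), hlt⟩)
    set A : ℤ := x (Fin.last (m+1)) + ∑ j, q j with hA
    set c : Fin (m+2) → ℤ := fun i => if i = Fin.last (m+1) then A else q i with hc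
    have hcj : ∀ j, c j = q j + (if j = Fin.last (m+1) then A else 0) := by
      intro j
      by_cases hj : j = Fin.last (m+1) <;> simp [hc, hj, hqlast]
    have hsum : ∑ j, c j = ∑ j, q j + A := by
      rw [Finset.sum_congr rfl (fun j _ => hcj j), Finset.sum_add_distrib,
        Finset.sum_ite_eq' Finset.univ]
      simp
    refine ⟨c, ?_⟩
    funext i
    rw [Matrix.mulVecLin_apply, keymv, hsum]
    by_cases hi : i = Fin.last (m+1)
    · simp [hi, hc, hA]; ring
    · simp only [hi, if_neg, if_false]
      have : c i = q i := by simp [hc, hi]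
      rw [this, hdq i hi]
      simp [hc, hA]
      ring

open Matrix in
theorem detB (m d : ℕ) :
    (Matrix.of fun i j : Fin (m+2) =>
        if (j : ℕ) = m + 1 then (1 : ℤ)
        else if i = j then (d : ℤ) - 1 else -1).det = (d : ℤ) ^ (m + 1) := by
  set B : Matrix (Fin (m+2)) (Fin (m+2)) ℤ := Matrix.of fun i j : Fin (m+2) =>
        if (j : ℕ) = m + 1 then (1 : ℤ)
        else if i = j then (d : ℤ) - 1 else -1 with hB
  set V : Matrix (Fin (m+2)) (Fin (m+2)) ℤ := Matrix.of fun i j : Fin (m+2) =>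
        (if i = j then (1:ℤ) else 0) +
        (if i = Fin.last (m+1) ∧ j ≠ Fin.last (m+1) then (1:ℤ) else 0) with hV
  set M : Matrix (Fin (m+2)) (Fin (m+2)) ℤ := Matrix.of fun i j : Fin (m+2) =>
        if j = Fin.last (m+1) then (1:ℤ) else if i = j then (d:ℤ) else 0 with hM
  have hjlast : ∀ j : Fin (m+2), ((j : ℕ) = m + 1) ↔ j = Fin.last (m+1) := by
    intro j; rw [Fin.ext_iff]; simp [Fin.val_last]
  have hBV : B * V = M := by
    ext i j
    simp only [Matrix.mul_apply, hB, hV, hM, Matrix.of_apply]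
    have hsplit : ∀ k : Fin (m+2),
        (if (k : ℕ) = m + 1 then (1 : ℤ) else if i = k then (d : ℤ) - 1 else -1) *
          ((if k = j then (1:ℤ) else 0) +
           (if k = Fin.last (m+1) ∧ j ≠ Fin.last (m+1) then (1:ℤ) else 0))
        = (if k = j then (if (j:ℕ) = m+1 then (1:ℤ) else if i = j then (d:ℤ)-1 else -1) else 0)
          + (if k = Fin.last (m+1) then (if j ≠ Fin.last (m+1) then (1:ℤ) else 0) else 0) := by
      intro k
      by_cases h1 : k = j <;> by_cases h2 : k = Fin.last (m+1) <;>
        by_cases h3 : j = Fin.last (m+1) <;>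
        simp [h1, h2, h3, hjlast] at * <;> simp_all [hjlast] <;> ring
    rw [Finset.sum_congr rfl (fun k _ => hsplit k), Finset.sum_add_distrib,
      Finset.sum_ite_eq' Finset.univ, Finset.sum_ite_eq' Finset.univ]
    simp only [Finset.mem_univ, if_true]
    by_cases h3 : j = Fin.last (m+1)
    · simp [h3, hjlast]
    · have : ¬ ((j:ℕ) = m+1) := by rw [hjlast]; exact h3
      by_cases h4 : i = j <;> simp [h3, h4, this] <;> ring
  have hVlow : V.BlockTriangular OrderDual.toDual := by
    intro i j hij
    have hij' : i < j := hij
    have h1 : i ≠ j := ne_of_lt hij'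
    have h2 : i ≠ Fin.last (m+1) := by
      intro h; rw [h] at hij'; exact absurd hij' (not_lt.mpr (Fin.le_last j))
    simp [hV, h1, h2]
  have hVdet : V.det = 1 := by
    rw [Matrix.det_of_lowerTriangular V hVlow]
    apply Finset.prod_eq_one
    intro i _
    simp [hV]
  have hMup : M.BlockTriangular id := by
    intro i j hij
    have hij' : (j : Fin (m+2)) < i := hij
    have h1 : i ≠ j := (ne_of_lt hij').symm
    have h2 : j ≠ Fin.last (m+1) := by
      intro h
      rw [h] at hij'
      exact absurd hij' (not_lt.mpr (Fin.le_last i))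
    simp [hM, h1, h2]
  have hMdet : M.det = (d : ℤ) ^ (m+1) := by
    rw [Matrix.det_of_upperTriangular hMup]
    have : ∀ i : Fin (m+2), M i i = if i = Fin.last (m+1) then (1:ℤ) else (d:ℤ) := by
      intro i; by_cases h : i = Fin.last (m+1) <;> simp [hM, h]
    rw [Finset.prod_congr rfl (fun i _ => this i),
      ← Finset.mul_prod_erase Finset.univ _ (Finset.mem_univ (Fin.last (m+1)))]
    rw [if_pos rfl, one_mul]
    rw [Finset.prod_congr rfl (fun x hx => if_neg (Finset.ne_of_mem_erase hx)),
      Finset.prod_const, Finset.card_erase_of_mem (Finset.mem_univ _)]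
    simp
  have := congrArg Matrix.det hBV
  rw [Matrix.det_mul, hVdet, mul_one, hMdet] at this
  exact this

theorem phi_surj (m d : ℕ) (hd : 2 ≤ d) : Function.Surjective (phi m d) := by
  haveI : NeZero d := ⟨by omega⟩
  intro t
  refine ⟨fun i => if h : (i : ℕ) < m + 1 then ((t ⟨i, h⟩).val : ℤ) else 0, ?_⟩
  funext k
  have h1 : ((k.castSucc : Fin (m+2)) : ℕ) < m + 1 := by
    simp only [Fin.coe_castSucc]; exact k.isLt
  have h2 : ¬ (((Fin.last (m+1) : Fin (m+2)) : ℕ) < m + 1) := by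
    simp [Fin.val_last]
  simp only [phi, LinearMap.coe_mk, AddHom.coe_mk]
  rw [dif_pos h1, dif_neg h2]
  have h3 : (⟨((k.castSucc : Fin (m+2)) : ℕ), h1⟩ : Fin (m+1)) = k := by
    rw [Fin.ext_iff]; simp
  rw [h3]
  push_cast
  simp [ZMod.natCast_val, ZMod.cast_id]

theorem stmt17 (n d : ℕ) (hn : 2 ≤ n) (hd : 2 ≤ d) :
    (Matrix.of fun i j : Fin n =>
        if (j : ℕ) = n - 1 then (1 : ℤ)
        else if i = j then (d : ℤ) - 1 else -1).det = (d : ℤ) ^ (n - 1) ∧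
      Nonempty
        (((Fin n → ℤ) ⧸ LinearMap.range
            (Matrix.mulVecLin (Matrix.of fun i j : Fin n =>
              if (j : ℕ) = n - 1 then (1 : ℤ)
              else if i = j then (d : ℤ) - 1 else -1))) ≃+
          (Fin (n - 1) → ZMod d)) := by
  obtain ⟨m, rfl⟩ : ∃ m, n = m + 2 := ⟨n - 2, by omega⟩
  have hred : m + 2 - 1 = m + 1 := rfl
  rw [hred]
  constructor
  · exact detB m d
  · refine ⟨?_⟩
    have e1 := Submodule.quotEquivOfEq _ _ (range_eq_ker m d)
    have e2 := (phi m d).quotKerEquivOfSurjective (phi_surj m d hd)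
    exact (e1.trans e2).toAddEquiv
end

section
/- For all integers n ≥ 4 and d ≥ n+2, one has C(n+d, d) − (n+1)² < C(2d−1, n) − (n+1)·C(d, n), where C(·,·) denotes the binomial coefficient. In particular the number of complex moduli m_d^n = C(n+d,d) − (n+1)² of a smooth degree-d hypersurface in ℙ^n differs from its Hodge number h^{n−2,1} = C(2d−1,n) − (n+1)C(d,n). -/
open Finset

lemma aux_vdm (n d : ℕ) (hn : 4 ≤ n) (hd : n + 2 ≤ d) :
    ((n + d).choose n : ℤ)
      + (((d - 1).choose 1 : ℤ) - (n.choose 1 : ℤ)) * (d.choose (n - 1) : ℤ)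
      + (((d - 1).choose 2 : ℤ) - (n.choose 2 : ℤ)) * (d.choose (n - 2) : ℤ)
      ≤ ((2 * d - 1).choose n : ℤ) := by
  have h2d : 2 * d - 1 = (d - 1) + d := by omega
  rw [h2d, Nat.add_choose_eq (d-1) d n, Nat.add_choose_eq n d n]
  push_cast
  set f : ℕ × ℕ → ℤ := fun ij =>
    ((d-1).choose ij.1 : ℤ) * (d.choose ij.2 : ℤ)
      - (n.choose ij.1 : ℤ) * (d.choose ij.2 : ℤ) with hf
  have hsum : ∀ ij ∈ antidiagonal n, (0:ℤ) ≤ f ij := by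
    intro ij _
    have h1 : n.choose ij.1 ≤ (d-1).choose ij.1 :=
      Nat.choose_le_choose _ (by omega)
    have h2 : (n.choose ij.1 : ℤ) * (d.choose ij.2 : ℤ)
        ≤ ((d-1).choose ij.1 : ℤ) * (d.choose ij.2 : ℤ) :=
      mul_le_mul_of_nonneg_right (by exact_mod_cast h1) (by positivity)
    simp only [hf]
    linarith
  have hne : ((1 : ℕ), n - 1) ≠ ((2 : ℕ), n - 2) := by
    intro h; exact absurd (congrArg Prod.fst h) (by norm_num)
  have hsub : ({((1 : ℕ), n - 1), ((2 : ℕ), n - 2)} : Finset (ℕ × ℕ))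
      ⊆ antidiagonal n := by
    intro x hx
    simp only [Finset.mem_insert, Finset.mem_singleton] at hx
    rcases hx with h | h <;> subst h <;> rw [Finset.HasAntidiagonal.mem_antidiagonal] <;> omega
  have hpair : ∑ ij ∈ ({((1 : ℕ), n - 1), ((2 : ℕ), n - 2)} : Finset (ℕ × ℕ)), f ij
      ≤ ∑ ij ∈ antidiagonal n, f ij := by
    apply Finset.sum_le_sum_of_subset_of_nonneg hsub
    intro x hx _; exact hsum x hx
  rw [Finset.sum_pair hne] at hpair
  have key : ∑ ij ∈ antidiagonal n, f ij
      = (∑ ij ∈ antidiagonal n, ((d-1).choose ij.1 : ℤ) * (d.choose ij.2 : ℤ))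
      - ∑ ij ∈ antidiagonal n, (n.choose ij.1 : ℤ) * (d.choose ij.2 : ℤ) :=
    Finset.sum_sub_distrib _ _
  rw [key] at hpair
  simp only [hf] at hpair
  linarith

lemma aux_poly (N D a b c : ℤ) (hN : 4 ≤ N) (hD : N + 2 ≤ D) (hc : 1 ≤ c)
    (hb : 0 ≤ b) (ha : 0 ≤ a)
    (j1 : a * N = b * (D - N + 1)) (j2 : b * (N - 1) = c * (D - N + 2)) :
    (N + 1) * a * 2 ≤ 2 * (D - N - 1) * b
      + ((D - 1) * (D - 2) - N * (N - 1)) * c := by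
  obtain ⟨e, he2, rfl⟩ : ∃ e, 2 ≤ e ∧ D = N + e := ⟨D - N, by omega, by omega⟩
  have hNN : (0:ℤ) < N * (N - 1) := by nlinarith
  have comb : a * (N * (N - 1)) = c * ((e + 1) * (e + 2)) := by
    linear_combination (N - 1) * j1 + (e + 1) * j2
  -- polynomial nonnegativity
  have hG : 0 ≤ 2 * N * (e - 1) * (e + 2)
      + ((N + e - 1) * (N + e - 2) - N * (N - 1)) * (N * (N - 1))
      - 2 * (N + 1) * ((e + 1) * (e + 2)) := by
    obtain ⟨M, hM0, rfl⟩ : ∃ M, 0 ≤ M ∧ N = M + 4 := ⟨N - 4, by omega, by omega⟩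
    obtain ⟨g, hg0, rfl⟩ : ∃ g, 0 ≤ g ∧ e = g + 2 := ⟨e - 2, by omega, by omega⟩
    nlinarith [mul_nonneg hM0 hg0, mul_nonneg (mul_nonneg hM0 hM0) hM0,
      mul_nonneg (mul_nonneg hM0 hM0) hg0, mul_nonneg (mul_nonneg hM0 hg0) hg0,
      mul_nonneg hM0 hM0, mul_nonneg hg0 hg0,
      mul_nonneg (mul_nonneg (mul_nonneg hM0 hM0) hM0) hg0,
      mul_nonneg (mul_nonneg (mul_nonneg hM0 hM0) hg0) hg0]
  have hc0 : (0:ℤ) ≤ c := by linarith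
  have hGc : 0 ≤ (2 * N * (e - 1) * (e + 2)
      + ((N + e - 1) * (N + e - 2) - N * (N - 1)) * (N * (N - 1))
      - 2 * (N + 1) * ((e + 1) * (e + 2))) * c := mul_nonneg hG hc0
  -- scaled inequality
  have big : (N + 1) * a * 2 * (N * (N - 1))
      ≤ (2 * (N + e - N - 1) * b
          + ((N + e - 1) * (N + e - 2) - N * (N - 1)) * c) * (N * (N - 1)) := by
    have lhsEq : (N + 1) * a * 2 * (N * (N - 1))
        = 2 * (N + 1) * (c * ((e + 1) * (e + 2))) := by
      linear_combination 2 * (N + 1) * comb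
    have rhsEq : (2 * (N + e - N - 1) * b
          + ((N + e - 1) * (N + e - 2) - N * (N - 1)) * c) * (N * (N - 1))
        = 2 * (e - 1) * N * (c * (e + 2))
          + ((N + e - 1) * (N + e - 2) - N * (N - 1)) * c * (N * (N - 1)) := by
      linear_combination 2 * (e - 1) * N * j2
    rw [lhsEq, rhsEq]
    nlinarith [hGc]
  have := le_of_mul_le_mul_right big hNN
  linarith [this]

lemma aux_arith (n d : ℕ) (hn : 4 ≤ n) (hd : n + 2 ≤ d) :
    ((n : ℤ) + 1) * (d.choose n : ℤ)
      ≤ (((d - 1).choose 1 : ℤ) - (n.choose 1 : ℤ)) * (d.choose (n - 1) : ℤ)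
        + (((d - 1).choose 2 : ℤ) - (n.choose 2 : ℤ)) * (d.choose (n - 2) : ℤ) := by
  have i1 : d.choose n * n = d.choose (n-1) * (d - (n-1)) := by
    have := Nat.choose_succ_right_eq d (n-1)
    rwa [show n - 1 + 1 = n by omega] at this
  have i2 : d.choose (n-1) * (n-1) = d.choose (n-2) * (d - (n-2)) := by
    have := Nat.choose_succ_right_eq d (n-2)
    rwa [show n - 2 + 1 = n - 1 by omega] at this
  have i3 : (d-1).choose 2 * 2 = (d-1) * (d-1-1) := by
    have := Nat.choose_succ_right_eq (d-1) 1
    rwa [Nat.choose_one_right] at this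
  have i4 : n.choose 2 * 2 = n * (n-1) := by
    have := Nat.choose_succ_right_eq n 1
    rwa [Nat.choose_one_right] at this
  have j1 : (d.choose n : ℤ) * n = (d.choose (n-1) : ℤ) * ((d:ℤ) - (n:ℤ) + 1) := by
    have h := congrArg (Nat.cast : ℕ → ℤ) i1
    push_cast [Nat.cast_sub (show n - 1 ≤ d by omega),
      Nat.cast_sub (show 1 ≤ n by omega)] at h
    linarith [h]
  have j2 : (d.choose (n-1) : ℤ) * ((n:ℤ) - 1)
      = (d.choose (n-2) : ℤ) * ((d:ℤ) - (n:ℤ) + 2) := by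
    have h := congrArg (Nat.cast : ℕ → ℤ) i2
    push_cast [Nat.cast_sub (show n - 2 ≤ d by omega),
      Nat.cast_sub (show 2 ≤ n by omega), Nat.cast_sub (show 1 ≤ n by omega)] at h
    linarith [h]
  have j3 : ((d-1).choose 2 : ℤ) * 2 = ((d:ℤ) - 1) * ((d:ℤ) - 2) := by
    have h := congrArg (Nat.cast : ℕ → ℤ) i3
    push_cast [Nat.cast_sub (show 1 ≤ d by omega),
      Nat.cast_sub (show 1 ≤ d - 1 by omega)] at h
    linarith [h]
  have j4 : (n.choose 2 : ℤ) * 2 = (n:ℤ) * ((n:ℤ) - 1) := by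
    have h := congrArg (Nat.cast : ℕ → ℤ) i4
    push_cast [Nat.cast_sub (show 1 ≤ n by omega)] at h
    linarith [h]
  have jc1 : ((d-1).choose 1 : ℤ) = (d:ℤ) - 1 := by
    rw [Nat.choose_one_right]
    push_cast [Nat.cast_sub (show 1 ≤ d by omega)]; ring
  have jc2 : (n.choose 1 : ℤ) = (n:ℤ) := by rw [Nat.choose_one_right]
  have hc1 : (1:ℤ) ≤ (d.choose (n-2) : ℤ) := by
    exact_mod_cast Nat.choose_pos (show n - 2 ≤ d by omega)
  have key := aux_poly (n:ℤ) (d:ℤ) (d.choose n : ℤ) (d.choose (n-1) : ℤ)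
    (d.choose (n-2) : ℤ) (by exact_mod_cast hn) (by exact_mod_cast hd) hc1
    (by positivity) (by positivity) j1 j2
  rw [jc1, jc2]
  nlinarith [key, j3, j4]

theorem stmt19 (n d : ℕ) (hn : 4 ≤ n) (hd : n + 2 ≤ d) :
    ((n + d).choose d : ℤ) - ((n : ℤ) + 1) ^ 2 <
      ((2 * d - 1).choose n : ℤ) - ((n : ℤ) + 1) * (d.choose n : ℤ) := by
  have hsymm : (n + d).choose d = (n + d).choose n :=
    (Nat.choose_symm_add (a := n) (b := d)).symm
  rw [hsymm]
  have h1 := aux_vdm n d hn hd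
  have h2 := aux_arith n d hn hd
  have h3 : (0:ℤ) < ((n:ℤ) + 1) ^ 2 := by positivity
  linarith
end
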